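/- Under the hypotheses of the previous statement (Gᵀ E G = λ E with λ > 0 and G maps some interior point of K to an interior point of K), the transpose Gᵀ also satisfies Gᵀ K = K. -/

import Mathlib

open scoped BigOperators
open Matrix

/-- The second-order cone in `ℝ^{n+1}`. -/
def soc (n : ℕ) : Set (Fin (n + 1) → ℝ) :=
  {x | Real.sqrt (∑ j : Fin n, x j.succ ^ 2) ≤ x 0}

/-- The interior of the second-order cone. -/
def socInt (n : ℕ) : Set (Fin (n + 1) → ℝ) :=
  {x | Real.sqrt (∑ j : Fin n, x j.succ ^ 2) < x 0}

/-- `E = diag(1, -I)`. -/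
def Emat (n : ℕ) : Matrix (Fin (n + 1)) (Fin (n + 1)) ℝ :=
  Matrix.diagonal fun i => if i = 0 then 1 else -1

noncomputable def tailE (n : ℕ) (x : Fin (n + 1) → ℝ) : EuclideanSpace ℝ (Fin n) :=
  WithLp.toLp 2 (fun j => x j.succ)

lemma norm_tailE (n : ℕ) (x : Fin (n + 1) → ℝ) :
    ‖tailE n x‖ = Real.sqrt (∑ j : Fin n, x j.succ ^ 2) := by
  rw [EuclideanSpace.norm_eq]
  congr 1
  exact Finset.sum_congr rfl fun j _ => by simp [tailE, Real.norm_eq_abs, sq_abs]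

lemma sq_norm_tailE (n : ℕ) (x : Fin (n + 1) → ℝ) :
    ‖tailE n x‖ ^ 2 = ∑ j : Fin n, x j.succ ^ 2 := by
  rw [norm_tailE, Real.sq_sqrt]; positivity

lemma mem_soc {n : ℕ} {x : Fin (n + 1) → ℝ} : x ∈ soc n ↔ ‖tailE n x‖ ≤ x 0 := by
  rw [soc, Set.mem_setOf_eq, norm_tailE]

lemma mem_socInt {n : ℕ} {x : Fin (n + 1) → ℝ} : x ∈ socInt n ↔ ‖tailE n x‖ < x 0 := by
  rw [socInt, Set.mem_setOf_eq, norm_tailE]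

lemma tailE_add (n : ℕ) (x y : Fin (n + 1) → ℝ) :
    tailE n (x + y) = tailE n x + tailE n y := rfl

lemma tailE_smul (n : ℕ) (c : ℝ) (x : Fin (n + 1) → ℝ) :
    tailE n (c • x) = c • tailE n x := rfl

lemma Emat_mulVec (n : ℕ) (x : Fin (n + 1) → ℝ) :
    (Emat n).mulVec x = fun i => (if i = 0 then 1 else -1) * x i := by
  ext i; simp [Emat, mulVec_diagonal]

lemma E_mem_socInt {n : ℕ} {x : Fin (n + 1) → ℝ} (h : x ∈ socInt n) :
    (Emat n).mulVec x ∈ socInt n := by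
  rw [socInt, Set.mem_setOf_eq] at h ⊢
  simp only [Emat_mulVec]
  simpa [Fin.succ_ne_zero] using h

lemma smul_mem_socInt {n : ℕ} {c : ℝ} {x : Fin (n + 1) → ℝ} (hc : 0 < c) (h : x ∈ socInt n) :
    c • x ∈ socInt n := by
  rw [mem_socInt] at h ⊢
  rw [tailE_smul, norm_smul, Real.norm_eq_abs, abs_of_pos hc, Pi.smul_apply, smul_eq_mul]
  exact mul_lt_mul_of_pos_left h hc

lemma Emat_sq (n : ℕ) : Emat n * Emat n = 1 := by
  rw [Emat, diagonal_mul_diagonal]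
  ext i j
  by_cases h : i = 0 <;> simp [h, Matrix.one_apply, Matrix.diagonal_apply]

lemma Emat_transpose (n : ℕ) : (Emat n)ᵀ = Emat n := by
  rw [Emat, diagonal_transpose]

lemma dot_E (n : ℕ) (x : Fin (n + 1) → ℝ) :
    x ⬝ᵥ (Emat n).mulVec x = x 0 ^ 2 - ∑ j : Fin n, x j.succ ^ 2 := by
  rw [dotProduct, Emat_mulVec, Fin.sum_univ_succ]
  have h1 : ∀ j : Fin n, x j.succ * ((if (j.succ : Fin (n+1)) = 0 then (1:ℝ) else -1) * x j.succ) = -(x j.succ ^ 2) := fun j => by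
    rw [if_neg (Fin.succ_ne_zero j)]; ring
  rw [Finset.sum_congr rfl fun j _ => h1 j, Finset.sum_neg_distrib]
  simp only [if_true]
  ring

lemma q_preserved {n : ℕ} {G : Matrix (Fin (n + 1)) (Fin (n + 1)) ℝ} {lam : ℝ}
    (hG : Gᵀ * Emat n * G = lam • Emat n) (x : Fin (n + 1) → ℝ) :
    (G.mulVec x) 0 ^ 2 - ∑ j : Fin n, (G.mulVec x) j.succ ^ 2
      = lam * (x 0 ^ 2 - ∑ j : Fin n, x j.succ ^ 2) := by
  have h1 : x ⬝ᵥ ((Gᵀ * Emat n * G).mulVec x) = x ⬝ᵥ ((lam • Emat n).mulVec x) := by rw [hG]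
  rw [smul_mulVec, dotProduct_smul, smul_eq_mul, dot_E] at h1
  rw [← h1, ← dot_E]
  rw [show Gᵀ * Emat n * G = Gᵀ * (Emat n * G) from mul_assoc _ _ _,
      ← mulVec_mulVec, dotProduct_mulVec x Gᵀ, vecMul_transpose, ← mulVec_mulVec]

lemma socInt_q_pos {n : ℕ} {x : Fin (n + 1) → ℝ} (hx : x ∈ socInt n) :
    ∑ j : Fin n, x j.succ ^ 2 < x 0 ^ 2 := by
  rw [mem_socInt] at hx
  have h0 : 0 ≤ ‖tailE n x‖ := norm_nonneg _
  nlinarith [sq_norm_tailE n x]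

lemma maps_int_ne {n : ℕ} {G : Matrix (Fin (n + 1)) (Fin (n + 1)) ℝ} {lam : ℝ}
    (hlam : 0 < lam) (hG : Gᵀ * Emat n * G = lam • Emat n)
    {y : Fin (n + 1) → ℝ} (hy : y ∈ socInt n) : (G.mulVec y) 0 ≠ 0 := by
  have hq := q_preserved hG y
  have h1 : 0 < lam * (y 0 ^ 2 - ∑ j : Fin n, y j.succ ^ 2) :=
    mul_pos hlam (by linarith [socInt_q_pos hy])
  have h2 : 0 ≤ ∑ j : Fin n, (G.mulVec y) j.succ ^ 2 :=
    Finset.sum_nonneg fun j _ => sq_nonneg _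
  intro h0
  rw [h0] at hq
  nlinarith

lemma segment_mem_socInt {n : ℕ} {η x : Fin (n + 1) → ℝ} (hη : η ∈ socInt n)
    (hx : x ∈ socInt n) {t : ℝ} (ht0 : 0 ≤ t) (ht1 : t ≤ 1) :
    (1 - t) • η + t • x ∈ socInt n := by
  rw [mem_socInt] at hη hx ⊢
  have hnorm : ‖tailE n ((1 - t) • η + t • x)‖ ≤ (1 - t) * ‖tailE n η‖ + t * ‖tailE n x‖ := by
    rw [tailE_add, tailE_smul, tailE_smul]
    calc ‖(1 - t) • tailE n η + t • tailE n x‖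
        ≤ ‖(1 - t) • tailE n η‖ + ‖t • tailE n x‖ := norm_add_le _ _
      _ = (1 - t) * ‖tailE n η‖ + t * ‖tailE n x‖ := by
          rw [norm_smul, norm_smul, Real.norm_eq_abs, Real.norm_eq_abs,
            abs_of_nonneg (by linarith), abs_of_nonneg ht0]
  have hz : ((1 - t) • η + t • x) 0 = (1 - t) * η 0 + t * x 0 := by
    simp [Pi.add_apply, Pi.smul_apply, smul_eq_mul]
  rw [hz]
  refine lt_of_le_of_lt hnorm ?_
  rcases eq_or_lt_of_le ht1 with h1 | h1
  · subst h1; simpa using hx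
  · have h2 : (1 - t) * ‖tailE n η‖ < (1 - t) * η 0 :=
      mul_lt_mul_of_pos_left hη (by linarith)
    have h3 : t * ‖tailE n x‖ ≤ t * x 0 := mul_le_mul_of_nonneg_left hx.le ht0
    linarith

lemma maps_int_pos {n : ℕ} {G : Matrix (Fin (n + 1)) (Fin (n + 1)) ℝ} {lam : ℝ}
    (hlam : 0 < lam) (hG : Gᵀ * Emat n * G = lam • Emat n)
    {η : Fin (n + 1) → ℝ} (hη1 : η ∈ socInt n) (hη2 : G.mulVec η ∈ socInt n)
    {x : Fin (n + 1) → ℝ} (hx : x ∈ socInt n) : 0 < (G.mulVec x) 0 := by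
  set a := (G.mulVec η) 0 with ha
  set b := (G.mulVec x) 0 with hb
  have hapos : 0 < a := lt_of_le_of_lt (norm_nonneg (tailE n (G.mulVec η))) (mem_socInt.mp hη2)
  have hbne : b ≠ 0 := maps_int_ne hlam hG hx
  by_contra hble
  push_neg at hble
  have hbneg : b < 0 := lt_of_le_of_ne hble hbne
  set t : ℝ := a / (a - b) with htdef
  have hab : 0 < a - b := by linarith
  have ht0 : 0 ≤ t := le_of_lt (div_pos hapos hab)
  have ht1 : t ≤ 1 := by
    rw [htdef, div_le_one hab]; linarith
  have hmem := segment_mem_socInt hη1 hx ht0 ht1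
  have hne := maps_int_ne hlam hG hmem
  apply hne
  have hlin : G.mulVec ((1 - t) • η + t • x) = (1 - t) • G.mulVec η + t • G.mulVec x := by
    rw [mulVec_add, mulVec_smul, mulVec_smul]
  rw [hlin]
  have : ((1 - t) • G.mulVec η + t • G.mulVec x) 0 = (1 - t) * a + t * b := by
    simp [Pi.add_apply, Pi.smul_apply, smul_eq_mul, ha, hb]
  rw [this, htdef]
  field_simp
  ring

lemma maps_soc {n : ℕ} {G : Matrix (Fin (n + 1)) (Fin (n + 1)) ℝ} {lam : ℝ}
    (hlam : 0 < lam) (hG : Gᵀ * Emat n * G = lam • Emat n)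
    {η : Fin (n + 1) → ℝ} (hη1 : η ∈ socInt n) (hη2 : G.mulVec η ∈ socInt n)
    {x : Fin (n + 1) → ℝ} (hx : x ∈ soc n) : G.mulVec x ∈ soc n := by
  have haux : ∀ s : ℝ, 0 < s → 0 < (G.mulVec x) 0 + s * (G.mulVec η) 0 := by
    intro s hs
    have hmem : x + s • η ∈ socInt n := by
      rw [mem_socInt, tailE_add, tailE_smul]
      have h1 : ‖tailE n x + s • tailE n η‖ ≤ ‖tailE n x‖ + s * ‖tailE n η‖ := by
        calc ‖tailE n x + s • tailE n η‖ ≤ ‖tailE n x‖ + ‖s • tailE n η‖ := norm_add_le _ _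
          _ = ‖tailE n x‖ + s * ‖tailE n η‖ := by
              rw [norm_smul, Real.norm_eq_abs, abs_of_pos hs]
      have h2 : ‖tailE n η‖ < η 0 := mem_socInt.mp hη1
      have h3 : ‖tailE n x‖ ≤ x 0 := mem_soc.mp hx
      have h4 : (x + s • η) 0 = x 0 + s * η 0 := by
        simp [Pi.add_apply, Pi.smul_apply, smul_eq_mul]
      rw [h4]
      have := mul_lt_mul_of_pos_left h2 hs
      linarith
    have hpos := maps_int_pos hlam hG hη1 hη2 hmem
    have hlin : G.mulVec (x + s • η) = G.mulVec x + s • G.mulVec η := by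
      rw [mulVec_add, mulVec_smul]
    rw [hlin] at hpos
    simpa [Pi.add_apply, Pi.smul_apply, smul_eq_mul] using hpos
  have ha : 0 < (G.mulVec η) 0 :=
    lt_of_le_of_lt (norm_nonneg (tailE n (G.mulVec η))) (mem_socInt.mp hη2)
  have h0 : 0 ≤ (G.mulVec x) 0 := by
    by_contra hneg
    push_neg at hneg
    have hs : 0 < -(G.mulVec x) 0 / (2 * (G.mulVec η) 0) :=
      div_pos (by linarith) (by linarith)
    have hthis := haux _ hs
    have heq : -(G.mulVec x) 0 / (2 * (G.mulVec η) 0) * (G.mulVec η) 0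
        = -(G.mulVec x) 0 / 2 := by
      field_simp
    rw [heq] at hthis
    linarith
  have hq := q_preserved hG x
  have hqx : 0 ≤ x 0 ^ 2 - ∑ j : Fin n, x j.succ ^ 2 := by
    rw [soc, Set.mem_setOf_eq] at hx
    have hx0 : 0 ≤ x 0 := le_trans (Real.sqrt_nonneg _) hx
    have hsum : (0:ℝ) ≤ ∑ j : Fin n, x j.succ ^ 2 :=
      Finset.sum_nonneg fun j _ => sq_nonneg _
    have h5 := Real.sq_sqrt hsum
    nlinarith [Real.sqrt_nonneg (∑ j : Fin n, x j.succ ^ 2)]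
  have h6 : ∑ j : Fin n, (G.mulVec x) j.succ ^ 2 ≤ (G.mulVec x) 0 ^ 2 := by
    nlinarith [mul_nonneg hlam.le hqx]
  rw [soc, Set.mem_setOf_eq]
  calc Real.sqrt (∑ j : Fin n, (G.mulVec x) j.succ ^ 2)
      ≤ Real.sqrt ((G.mulVec x) 0 ^ 2) := Real.sqrt_le_sqrt h6
    _ = (G.mulVec x) 0 := by rw [Real.sqrt_sq h0]

lemma soc_image_eq {n : ℕ} {G : Matrix (Fin (n + 1)) (Fin (n + 1)) ℝ} {lam : ℝ}
    (hlam : 0 < lam) (hG : Gᵀ * Emat n * G = lam • Emat n)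
    (hη : ∃ η ∈ socInt n, G.mulVec η ∈ socInt n) :
    G.mulVec '' soc n = soc n := by
  obtain ⟨η, hη1, hη2⟩ := hη
  set H : Matrix (Fin (n + 1)) (Fin (n + 1)) ℝ := lam⁻¹ • (Emat n * Gᵀ * Emat n) with hHdef
  have hG' : Gᵀ * (Emat n * G) = lam • Emat n := by rw [← mul_assoc]; exact hG
  have hHG : H * G = 1 := by
    calc H * G = lam⁻¹ • (Emat n * (Gᵀ * (Emat n * G))) := by
          rw [hHdef, Matrix.smul_mul]; congr 1; simp only [mul_assoc]
      _ = 1 := by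
          rw [hG', Matrix.mul_smul, Emat_sq, smul_smul, inv_mul_cancel₀ hlam.ne', one_smul]
  have hGH : G * H = 1 := mul_eq_one_comm.mpr hHG
  have h1 : G * (Emat n * (Gᵀ * Emat n)) = lam • 1 := by
    have h2 : lam • (G * H) = lam • (1 : Matrix (Fin (n + 1)) (Fin (n + 1)) ℝ) := by rw [hGH]
    rw [hHdef, Matrix.mul_smul, smul_smul, mul_inv_cancel₀ hlam.ne', one_smul] at h2
    rw [← h2]; congr 1; simp only [mul_assoc]
  have hflip : G * (Emat n * Gᵀ) = lam • Emat n := by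
    have h2 : G * (Emat n * (Gᵀ * Emat n)) * Emat n = (lam • 1) * Emat n := by rw [h1]
    rw [Matrix.smul_mul, one_mul] at h2
    calc G * (Emat n * Gᵀ)
        = G * (Emat n * (Gᵀ * (Emat n * Emat n))) := by rw [Emat_sq, mul_one]
      _ = G * (Emat n * (Gᵀ * Emat n)) * Emat n := by simp only [mul_assoc]
      _ = lam • Emat n := h2
  have hHt : Hᵀ = lam⁻¹ • (Emat n * (G * Emat n)) := by
    rw [hHdef, Matrix.transpose_smul, Matrix.transpose_mul, Matrix.transpose_mul,
      Emat_transpose, transpose_transpose]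
  have hHrel : Hᵀ * Emat n * H = lam⁻¹ • Emat n := by
    rw [hHt, hHdef, Matrix.smul_mul, Matrix.smul_mul, Matrix.mul_smul, smul_smul]
    have hbig : Emat n * (G * Emat n) * Emat n * (Emat n * Gᵀ * Emat n) = lam • Emat n := by
      calc Emat n * (G * Emat n) * Emat n * (Emat n * Gᵀ * Emat n)
          = Emat n * (G * (Emat n * ((Emat n * Emat n) * (Gᵀ * Emat n)))) := by
            simp only [mul_assoc]
        _ = Emat n * (G * (Emat n * (Gᵀ * Emat n))) := by rw [Emat_sq, one_mul]
        _ = Emat n * (G * (Emat n * Gᵀ) * Emat n) := by simp only [mul_assoc]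
        _ = Emat n * ((lam • Emat n) * Emat n) := by rw [hflip]
        _ = lam • Emat n := by
            rw [Matrix.smul_mul, Matrix.mul_smul, ← mul_assoc, Emat_sq, one_mul]
    rw [hbig, smul_smul]
    congr 1
    field_simp
  have hHη : H.mulVec (G.mulVec η) = η := by rw [mulVec_mulVec, hHG, one_mulVec]
  have hHη2 : H.mulVec (G.mulVec η) ∈ socInt n := by rw [hHη]; exact hη1
  apply Set.Subset.antisymm
  · rintro _ ⟨y, hy, rfl⟩
    exact maps_soc hlam hG hη1 hη2 hy
  · intro y hy
    refine ⟨H.mulVec y, maps_soc (inv_pos.mpr hlam) hHrel hη2 hHη2 hy, ?_⟩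
    rw [mulVec_mulVec, hGH, one_mulVec]

/-- under the hypotheses `Gᵀ E G = λ E`, `λ > 0`, and `G` maps some interior
point of `K` to an interior point, the transpose also satisfies `Gᵀ K = K`. -/
theorem stmt3 (n : ℕ) (G : Matrix (Fin (n + 1)) (Fin (n + 1)) ℝ) (lam : ℝ) (hlam : 0 < lam)
    (hG : Gᵀ * Emat n * G = lam • Emat n)
    (hη : ∃ η ∈ socInt n, G.mulVec η ∈ socInt n) :
    Gᵀ.mulVec '' soc n = soc n := by
  obtain ⟨η, hη1, hη2⟩ := hη
  -- flip identity for Gᵀ (reuse the algebra from soc_image_eq by re-deriving it)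
  have hG' : Gᵀ * (Emat n * G) = lam • Emat n := by rw [← mul_assoc]; exact hG
  have hHG : (lam⁻¹ • (Emat n * Gᵀ * Emat n)) * G = 1 := by
    calc (lam⁻¹ • (Emat n * Gᵀ * Emat n)) * G
        = lam⁻¹ • (Emat n * (Gᵀ * (Emat n * G))) := by
          rw [Matrix.smul_mul]; congr 1; simp only [mul_assoc]
      _ = 1 := by
          rw [hG', Matrix.mul_smul, Emat_sq, smul_smul, inv_mul_cancel₀ hlam.ne', one_smul]
  have hGH : G * (lam⁻¹ • (Emat n * Gᵀ * Emat n)) = 1 := mul_eq_one_comm.mpr hHG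
  have h1 : G * (Emat n * (Gᵀ * Emat n)) = lam • 1 := by
    have h2 : lam • (G * (lam⁻¹ • (Emat n * Gᵀ * Emat n)))
        = lam • (1 : Matrix (Fin (n + 1)) (Fin (n + 1)) ℝ) := by rw [hGH]
    rw [Matrix.mul_smul, smul_smul, mul_inv_cancel₀ hlam.ne', one_smul] at h2
    rw [← h2]; congr 1; simp only [mul_assoc]
  have hflip : Gᵀᵀ * Emat n * Gᵀ = lam • Emat n := by
    rw [transpose_transpose]
    have h2 : G * (Emat n * (Gᵀ * Emat n)) * Emat n = (lam • 1) * Emat n := by rw [h1]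
    rw [Matrix.smul_mul, one_mul] at h2
    calc G * Emat n * Gᵀ
        = G * (Emat n * (Gᵀ * (Emat n * Emat n))) := by rw [Emat_sq, mul_one]; simp only [mul_assoc]
      _ = G * (Emat n * (Gᵀ * Emat n)) * Emat n := by simp only [mul_assoc]
      _ = lam • Emat n := h2
  -- witness for Gᵀ
  have hw1 : (Emat n).mulVec (G.mulVec η) ∈ socInt n := E_mem_socInt hη2
  have hw2 : Gᵀ.mulVec ((Emat n).mulVec (G.mulVec η)) ∈ socInt n := by
    have : Gᵀ.mulVec ((Emat n).mulVec (G.mulVec η)) = lam • (Emat n).mulVec η := by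
      rw [mulVec_mulVec, mulVec_mulVec, hG, smul_mulVec]
    rw [this]
    exact smul_mem_socInt hlam (E_mem_socInt hη1)
  exact soc_image_eq hlam hflip ⟨_, hw1, hw2⟩
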